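/- Let N̂ᴬ and n̂ᴬ be nonnegative reals with N̂ᴬ < n̂ᴬ, and let G ≥ 1 be a positive integer. Define ρ = N̂ᴬ/(G·n̂ᴬ) and ρ' = (N̂ᴬ+1)/(G·(n̂ᴬ+1)). Then the pseudo-count N̂ = ρ(1-ρ')/(ρ'-ρ) equals N̂ᴬ·(1 + (G-1)(N̂ᴬ+1)/(G·(n̂ᴬ-N̂ᴬ))). -/

import Mathlib

theorem exact_abstraction_pseudo_count_formula
    (NA nA : ℝ) (hNA : 0 ≤ NA) (h : NA < nA) (G : ℕ) (hG : 1 ≤ G) :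
    (NA / ((G : ℝ) * nA)) * (1 - (NA + 1) / ((G : ℝ) * (nA + 1))) /
      ((NA + 1) / ((G : ℝ) * (nA + 1)) - NA / ((G : ℝ) * nA))
      = NA * (1 + ((G : ℝ) - 1) * (NA + 1) / ((G : ℝ) * (nA - NA))) := by
  have hn : (0:ℝ) < nA := lt_of_le_of_lt hNA h
  have hG0 : (0:ℝ) < (G:ℝ) := by exact_mod_cast Nat.lt_of_lt_of_le Nat.zero_lt_one hG
  have hn1 : (0:ℝ) < nA + 1 := by linarith
  have hd : (NA + 1) / ((G : ℝ) * (nA + 1)) - NA / ((G : ℝ) * nA)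
      = (G : ℝ) * (nA - NA) / (((G : ℝ) * nA) * ((G : ℝ) * (nA + 1))) := by
    field_simp
    ring
  rw [hd]
  have h1 : ((G:ℝ) * nA) ≠ 0 := by positivity
  have h2 : ((G:ℝ) * (nA + 1)) ≠ 0 := by positivity
  have h3 : ((G:ℝ) * (nA - NA)) ≠ 0 := by
    have : (0:ℝ) < nA - NA := by linarith
    positivity
  field_simp
  exact (by have h4 : nA - NA ≠ 0 := sub_ne_zero.mpr (ne_of_gt h); field_simp; ring)
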